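/- In the dynamic network creation game in which players' communication cost uses the temporal shortest distance, for every real atomic cost α > 0 and every strategy profile s on n ≥ 2 players whose communication temporal graph is 𝒢[s] = (V, E, λ), the social cost satisfies c[s] ≥ 2n(n−1) + (α−2)|E|; moreover equality holds if 𝒢[s] has simple labelling and d_{𝒢[s]}(u,v) ≤ 2 for every ordered pair of distinct vertices u, v. -/

import Mathlib

open scoped ENNReal BigOperators

/-- A temporal path from `u` to `v`, given as a list of steps `(next vertex, time label)`.
The labelling `lab` gives, for each (ordered) pair of vertices, the set of time labels of the
edge joining them (empty if there is no edge); it is symmetric for temporal graphs arising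
from strategy profiles.  The conditions say that consecutive steps use time labels belonging
to the corresponding edge, that time labels strictly increase along the path, that no vertex is
repeated, and that the path ends at `v`. -/
def IsTemporalPath {V : Type*} (lab : V → V → Set ℕ) (u v : V) (p : List (V × ℕ)) : Prop :=
  List.Chain (fun a b => b.2 ∈ lab a.1 b.1) (u, 0) p ∧
  List.Chain' (· < ·) (p.map Prod.snd) ∧
  (u :: p.map Prod.fst).Nodup ∧
  (u :: p.map Prod.fst).getLast (List.cons_ne_nil _ _) = v

/-- The temporal shortest distance from `u` to `v`: the least number of edges of a temporal
path from `u` to `v` (`0` if `u = v`, `⊤` if there is no temporal path). -/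
noncomputable def temporalDist {V : Type*} (lab : V → V → Set ℕ) (u v : V) : ℕ∞ :=
  sInf {n : ℕ∞ | ∃ p : List (V × ℕ), IsTemporalPath lab u v p ∧ (p.length : ℕ∞) = n}

/-- The labelling of the communication temporal graph `𝒢[s]` of a strategy profile `s`:
`t` is a label of the edge `uv` iff `(u, t) ∈ s v` or `(v, t) ∈ s u`. -/
def profLab {V : Type*} (s : V → Finset (V × ℕ)) : V → V → Set ℕ :=
  fun u v => {t | (u, t) ∈ s v ∨ (v, t) ∈ s u}

/-- The (finite) set of time labels of the edge `uv` in the communication temporal graph. -/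
def labelFinset {V : Type*} [DecidableEq V] (s : V → Finset (V × ℕ)) (u v : V) : Finset ℕ :=
  (((s v).filter (fun p => p.1 = u)).image Prod.snd) ∪
    (((s u).filter (fun p => p.1 = v)).image Prod.snd)

/-- The total number of time labels `∑ e ∈ E, |λ(e)|` of the communication temporal graph
(each unordered pair is counted once, whence the division by `2`). -/
def numLabels {V : Type*} [Fintype V] [DecidableEq V] (s : V → Finset (V × ℕ)) : ℕ :=
  (∑ u : V, ∑ v : V, if u = v then 0 else (labelFinset s u v).card) / 2

/-- The number of edges `|E|` of the communication temporal graph. -/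
def numEdges {V : Type*} [Fintype V] [DecidableEq V] (s : V → Finset (V × ℕ)) : ℕ :=
  ((Finset.univ : Finset (V × V)).filter
    (fun q => q.1 ≠ q.2 ∧ (labelFinset s q.1 q.2).Nonempty)).card / 2

/-- The social cost `c[s] = α·∑_{e ∈ E} |λ(e)| + ∑_{(u,v) ∈ V×V} d_{𝒢[s]}(u,v)`
of a strategy profile `s` for atomic cost `α`. -/
noncomputable def socialCost {V : Type*} [Fintype V] [DecidableEq V]
    (α : ℝ) (s : V → Finset (V × ℕ)) : ℝ≥0∞ :=
  ENNReal.ofReal α * (numLabels s : ℝ≥0∞) +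
    ∑ u : V, ∑ v : V, (temporalDist (profLab s) u v : ℝ≥0∞)

/-- The individual cost `c[s](v) = α·|s(v)| + ∑_{w ∈ V} d_{𝒢[s]}(v,w)` of player `v`. -/
noncomputable def indivCost {V : Type*} [Fintype V]
    (α : ℝ) (s : V → Finset (V × ℕ)) (v : V) : ℝ≥0∞ :=
  ENNReal.ofReal α * ((s v).card : ℝ≥0∞) +
    ∑ w : V, (temporalDist (profLab s) v w : ℝ≥0∞)

/-- A strategy profile is a Nash equilibrium if no player can strictly decrease its individual
cost by changing only its own strategy. -/
def IsNash {V : Type*} [Fintype V] [DecidableEq V] (α : ℝ) (s : V → Finset (V × ℕ)) : Prop :=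
  ∀ (v : V) (t : Finset (V × ℕ)),
    ¬ indivCost α (Function.update s v t) v < indivCost α s v

/-- The optimal social cost `c*(α, n)`: the minimum social cost over all strategy profiles
with `n` players and atomic cost `α`. -/
noncomputable def optCost (α : ℝ) (n : ℕ) : ℝ≥0∞ :=
  ⨅ s : Fin n → Finset (Fin n × ℕ), socialCost α s

/-- The price of anarchy `PoA(α, n)`: the maximum social cost of a Nash equilibrium with `n`
players and atomic cost `α`, divided by the optimal social cost `c*(α, n)`. -/
noncomputable def PoA (α : ℝ) (n : ℕ) : ℝ≥0∞ :=
  (⨆ s : {s : Fin n → Finset (Fin n × ℕ) // IsNash α s}, socialCost α s.1) / optCost α n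

/-- The price of stability `PoS(α, n)`: the minimum social cost of a Nash equilibrium with `n`
players and atomic cost `α`, divided by the optimal social cost `c*(α, n)`. -/
noncomputable def PoS (α : ℝ) (n : ℕ) : ℝ≥0∞ :=
  (⨅ s : {s : Fin n → Finset (Fin n × ℕ) // IsNash α s}, socialCost α s.1) / optCost α n

section aux
variable {V : Type*}

lemma temporalDist_self (lab : V → V → Set ℕ) (u : V) : temporalDist lab u u = 0 := by
  refine le_antisymm (sInf_le ?_) zero_le
  exact ⟨[], ⟨List.Chain.nil, List.isChain_nil, by simp, rfl⟩, by simp⟩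

lemma one_le_temporalDist (lab : V → V → Set ℕ) {u v : V} (h : u ≠ v) :
    1 ≤ temporalDist lab u v := by
  refine le_sInf ?_
  rintro m ⟨p, hp, rfl⟩
  cases p with
  | nil => exact absurd hp.2.2.2 (by simpa using h)
  | cons a l => exact_mod_cast Nat.succ_le_succ (Nat.zero_le _)

lemma two_le_temporalDist (lab : V → V → Set ℕ) {u v : V} (h : u ≠ v)
    (hlab : ∀ t, t ∉ lab u v) : 2 ≤ temporalDist lab u v := by
  refine le_sInf ?_
  rintro m ⟨p, hp, rfl⟩
  match p with
  | [] => exact absurd hp.2.2.2 (by simpa using h)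
  | [a] =>
    obtain ⟨h1, _, _, h4⟩ := hp
    have ha : a.1 = v := by simpa using h4
    have ht : a.2 ∈ lab u a.1 := (List.chain_cons.mp h1).1
    exact absurd (ha ▸ ht) (hlab a.2)
  | a :: b :: l =>
    have : 2 ≤ (a :: b :: l).length := by simp
    exact_mod_cast this

lemma temporalDist_le_one (lab : V → V → Set ℕ) {u v : V} (h : u ≠ v) {t : ℕ}
    (ht : t ∈ lab u v) : temporalDist lab u v ≤ 1 := by
  apply sInf_le
  exact ⟨[(v, t)], ⟨List.Chain.cons ht List.Chain.nil, List.isChain_singleton _, by simp [h], by simp⟩, by simp⟩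

end aux

/-- For every atomic cost `α > 0` and every strategy profile `s` on `n ≥ 2` players, the
social cost satisfies `c[s] ≥ 2n(n-1) + (α-2)|E|`; moreover equality holds if the
communication temporal graph of `s` has simple labelling and the temporal shortest distance
between every ordered pair of distinct vertices is at most `2`. -/
theorem statement_5 (α : ℝ) (hα : 0 < α) (n : ℕ) (hn : 2 ≤ n)
    (s : Fin n → Finset (Fin n × ℕ)) :
    ENNReal.ofReal (2 * (n : ℝ) * ((n : ℝ) - 1) + (α - 2) * (numEdges s : ℝ)) ≤
        socialCost α s ∧
      (((∀ u v : Fin n, u ≠ v → (labelFinset s u v).card ≤ 1) ∧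
          ∀ u v : Fin n, u ≠ v → temporalDist (profLab s) u v ≤ 2) →
        socialCost α s =
          ENNReal.ofReal (2 * (n : ℝ) * ((n : ℝ) - 1) + (α - 2) * (numEdges s : ℝ))) := by
  classical
  have hmem : ∀ u v t, t ∈ labelFinset s u v ↔ t ∈ profLab s u v := by
    intro u v t
    simp only [labelFinset, profLab, Finset.mem_union, Finset.mem_image, Finset.mem_filter,
      Set.mem_setOf_eq]
    constructor
    · rintro (⟨⟨a, b⟩, ⟨hm, rfl⟩, rfl⟩ | ⟨⟨a, b⟩, ⟨hm, rfl⟩, rfl⟩)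
      · exact Or.inl hm
      · exact Or.inr hm
    · rintro (hm | hm)
      · exact Or.inl ⟨(u, t), ⟨hm, rfl⟩, rfl⟩
      · exact Or.inr ⟨(v, t), ⟨hm, rfl⟩, rfl⟩
  have hsymm : ∀ u v : Fin n, labelFinset s u v = labelFinset s v u := fun u v =>
    Finset.union_comm _ _
  set P := (Finset.univ : Finset (Fin n × Fin n)).filter
      (fun q => q.1 ≠ q.2 ∧ (labelFinset s q.1 q.2).Nonempty) with hPdef
  set D := (Finset.univ : Finset (Fin n × Fin n)).filter (fun q => q.1 ≠ q.2) with hDdef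
  have hPdvd : 2 ∣ P.card := by
    have hsplit := Finset.card_filter_add_card_filter_not
      (s := P) (p := fun q => q.1 < q.2)
    have hbij : (P.filter fun q => q.1 < q.2).card = (P.filter fun q => ¬ q.1 < q.2).card := by
      apply Finset.card_bij (fun q _ => q.swap)
      · intro q hq
        simp only [hPdef, Finset.mem_filter, Finset.mem_univ, true_and, Prod.fst_swap,
          Prod.snd_swap] at hq ⊢
        obtain ⟨⟨hne, hne'⟩, hlt⟩ := hq
        refine ⟨⟨hne.symm, ?_⟩, not_lt.mpr hlt.le⟩
        rw [hsymm q.2 q.1]; exact hne'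
      · intro a _ b _ hab
        exact Prod.swap_injective hab
      · intro q hq
        refine ⟨q.swap, ?_, by simp⟩
        simp only [hPdef, Finset.mem_filter, Finset.mem_univ, true_and, Prod.fst_swap,
          Prod.snd_swap] at hq ⊢
        obtain ⟨⟨hne, hne'⟩, hlt⟩ := hq
        refine ⟨⟨hne.symm, ?_⟩, lt_of_le_of_ne (not_lt.mp hlt) hne.symm⟩
        rw [hsymm q.2 q.1]; exact hne'
    rw [hbij] at hsplit
    omega
  have hE2 : 2 * numEdges s = P.card := Nat.mul_div_cancel' hPdvd
  have hPD : P ⊆ D := by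
    intro q hq
    simp only [hPdef, hDdef, Finset.mem_filter] at hq ⊢
    exact ⟨hq.1, hq.2.1⟩
  have hPleD : P.card ≤ D.card := Finset.card_le_card hPD
  have hDcard : D.card = n ^ 2 - n := by
    have h1 : (Finset.univ.filter fun q : Fin n × Fin n => ¬ q.1 ≠ q.2) =
        Finset.univ.image fun a : Fin n => (a, a) := by
      ext ⟨x, y⟩
      simp [Prod.ext_iff, eq_comm]
    have h2 : (Finset.univ.filter fun q : Fin n × Fin n => ¬ q.1 ≠ q.2).card = n := by
      rw [h1, Finset.card_image_of_injective _ (fun a b h => congrArg Prod.fst h)]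
      simp
    have h3 := Finset.card_filter_add_card_filter_not
      (s := (Finset.univ : Finset (Fin n × Fin n))) (p := fun q => q.1 ≠ q.2)
    have h4 : (Finset.univ : Finset (Fin n × Fin n)).card = n * n := by simp
    rw [h4, h2, ← hDdef] at h3
    have hsq : n ^ 2 = n * n := sq n
    omega
  set f : Fin n × Fin n → ℕ := fun q =>
    if q.1 = q.2 then 0 else if (labelFinset s q.1 q.2).Nonempty then 1 else 2 with hfdef
  have hDfilter : D.filter (fun q => (labelFinset s q.1 q.2).Nonempty) = P := by
    rw [hDdef, Finset.filter_filter]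
  have hfsum : ∑ q : Fin n × Fin n, f q = 2 * D.card - P.card := by
    have e1 : ∑ q : Fin n × Fin n, f q = ∑ q ∈ D, f q := by
      refine (Finset.sum_subset (Finset.subset_univ D) ?_).symm
      intro q _ hq
      simp only [hDdef, Finset.mem_filter, Finset.mem_univ, true_and, not_not] at hq
      simp [hfdef, hq]
    have e2 := Finset.sum_filter_add_sum_filter_not D
      (fun q => (labelFinset s q.1 q.2).Nonempty) f
    have e3 : ∑ q ∈ P, f q = P.card := by
      rw [Finset.card_eq_sum_ones]
      refine Finset.sum_congr rfl fun q hq => ?_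
      simp only [hPdef, Finset.mem_filter] at hq
      simp [hfdef, hq.2.1, hq.2.2]
    have e4 : ∀ q ∈ D.filter (fun q => ¬ (labelFinset s q.1 q.2).Nonempty), f q = 2 := by
      intro q hq
      simp only [hDdef, Finset.mem_filter, Finset.mem_univ, true_and] at hq
      simp [hfdef, hq.1, hq.2]
    have e5 : ∑ q ∈ D.filter (fun q => ¬ (labelFinset s q.1 q.2).Nonempty), f q
        = (D.filter (fun q => ¬ (labelFinset s q.1 q.2).Nonempty)).card * 2 := by
      rw [Finset.sum_congr rfl e4, Finset.sum_const, smul_eq_mul]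
    have e6 := Finset.card_filter_add_card_filter_not
      (s := D) (p := fun q => (labelFinset s q.1 q.2).Nonempty)
    rw [hDfilter] at e2 e6
    omega
  have hnoedge : ∀ u v : Fin n, ¬ (labelFinset s u v).Nonempty → ∀ t, t ∉ profLab s u v :=
    fun u v h t ht => h ⟨t, (hmem u v t).mpr ht⟩
  have hpt : ∀ q : Fin n × Fin n, (f q : ℝ≥0∞) ≤ (temporalDist (profLab s) q.1 q.2 : ℝ≥0∞) := by
    intro q
    by_cases h1 : q.1 = q.2
    · simp [hfdef, h1]
    · by_cases h2 : (labelFinset s q.1 q.2).Nonempty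
      · have h3 := ENat.toENNReal_le.mpr (one_le_temporalDist (profLab s) h1)
        simpa [hfdef, h1, h2] using h3
      · have h3 := ENat.toENNReal_le.mpr
          (two_le_temporalDist (profLab s) h1 (hnoedge _ _ h2))
        simpa [hfdef, h1, h2] using h3
  have hsumd : ((2 * D.card - P.card : ℕ) : ℝ≥0∞) ≤
      ∑ u : Fin n, ∑ v : Fin n, (temporalDist (profLab s) u v : ℝ≥0∞) := by
    rw [← Finset.sum_product', Finset.univ_product_univ]
    calc ((2 * D.card - P.card : ℕ) : ℝ≥0∞)
        = ((∑ q : Fin n × Fin n, f q : ℕ) : ℝ≥0∞) := by rw [hfsum]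
      _ = ∑ q : Fin n × Fin n, (f q : ℝ≥0∞) := by push_cast; rfl
      _ ≤ _ := Finset.sum_le_sum fun q _ => hpt q
  have hSlab : P.card ≤ ∑ u : Fin n, ∑ v : Fin n,
      if u = v then 0 else (labelFinset s u v).card := by
    rw [← Finset.sum_product', Finset.univ_product_univ]
    calc P.card = ∑ _q ∈ P, 1 := by rw [Finset.card_eq_sum_ones]
      _ ≤ ∑ q ∈ P, (if q.1 = q.2 then 0 else (labelFinset s q.1 q.2).card) := by
          refine Finset.sum_le_sum fun q hq => ?_
          simp only [hPdef, Finset.mem_filter] at hq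
          rw [if_neg hq.2.1]
          exact hq.2.2.card_pos
      _ ≤ _ := Finset.sum_le_sum_of_subset (Finset.subset_univ P)
  have hnEnL : numEdges s ≤ numLabels s := Nat.div_le_div_right hSlab
  have hP2D : P.card ≤ 2 * D.card := le_trans hPleD (by omega)
  have hkey : (2 * (n:ℝ) * ((n:ℝ) - 1) + (α - 2) * (numEdges s : ℝ))
      = α * (numEdges s : ℝ) + ((2 * D.card - P.card : ℕ) : ℝ) := by
    have c1 : ((2 * D.card - P.card : ℕ) : ℝ) = 2 * (D.card : ℝ) - (P.card : ℝ) := by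
      push_cast [Nat.cast_sub hP2D]
      ring
    have c2 : (P.card : ℝ) = 2 * (numEdges s : ℝ) := by exact_mod_cast hE2.symm
    have c3 : (D.card : ℝ) = (n:ℝ)^2 - (n:ℝ) := by
      rw [hDcard]
      push_cast [Nat.cast_sub (Nat.le_self_pow two_ne_zero n)]
      ring
    rw [c1, c2, c3]; ring
  have htarget : ENNReal.ofReal (2 * (n:ℝ) * ((n:ℝ) - 1) + (α - 2) * (numEdges s : ℝ))
      = ENNReal.ofReal α * ((numEdges s : ℕ) : ℝ≥0∞) + ((2 * D.card - P.card : ℕ) : ℝ≥0∞) := by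
    rw [hkey, ENNReal.ofReal_add (by positivity) (Nat.cast_nonneg _), ENNReal.ofReal_mul hα.le,
      ENNReal.ofReal_natCast, ENNReal.ofReal_natCast]
  constructor
  · rw [htarget]
    show _ ≤ ENNReal.ofReal α * (numLabels s : ℝ≥0∞) + _
    exact add_le_add (mul_le_mul_right (Nat.cast_le.mpr hnEnL) _) hsumd
  · rintro ⟨hsimple, hdist2⟩
    have hScard : (∑ u : Fin n, ∑ v : Fin n, if u = v then 0 else (labelFinset s u v).card)
        = P.card := by
      rw [← Finset.sum_product', Finset.univ_product_univ]
      have e1 : ∑ q : Fin n × Fin n, (if q.1 = q.2 then 0 else (labelFinset s q.1 q.2).card)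
          = ∑ q ∈ D, (if q.1 = q.2 then 0 else (labelFinset s q.1 q.2).card) := by
        refine (Finset.sum_subset (Finset.subset_univ D) ?_).symm
        intro q _ hq
        simp only [hDdef, Finset.mem_filter, Finset.mem_univ, true_and, not_not] at hq
        simp [hq]
      have e2 := Finset.sum_filter_add_sum_filter_not D
        (fun q => (labelFinset s q.1 q.2).Nonempty)
        (fun q => if q.1 = q.2 then 0 else (labelFinset s q.1 q.2).card)
      have e3 : ∑ q ∈ P, (if q.1 = q.2 then 0 else (labelFinset s q.1 q.2).card) = P.card := by
        rw [Finset.card_eq_sum_ones]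
        refine Finset.sum_congr rfl fun q hq => ?_
        simp only [hPdef, Finset.mem_filter] at hq
        rw [if_neg hq.2.1]
        exact le_antisymm (hsimple _ _ hq.2.1) hq.2.2.card_pos
      have e4 : ∑ q ∈ D.filter (fun q => ¬ (labelFinset s q.1 q.2).Nonempty),
          (if q.1 = q.2 then 0 else (labelFinset s q.1 q.2).card) = 0 := by
        refine Finset.sum_eq_zero fun q hq => ?_
        simp only [hDdef, Finset.mem_filter, Finset.mem_univ, true_and,
          Finset.not_nonempty_iff_eq_empty] at hq
        simp [hq.1, hq.2]
      rw [hDfilter] at e2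
      omega
    have hLE : numLabels s = numEdges s := by
      show (∑ u : Fin n, ∑ v : Fin n, if u = v then 0 else (labelFinset s u v).card) / 2
          = numEdges s
      rw [hScard]; rfl
    have hdpt : ∀ q : Fin n × Fin n,
        (temporalDist (profLab s) q.1 q.2 : ℝ≥0∞) = (f q : ℝ≥0∞) := by
      intro q
      by_cases h1 : q.1 = q.2
      · rw [h1, temporalDist_self]
        simp [hfdef, h1]
      · by_cases h2 : (labelFinset s q.1 q.2).Nonempty
        · obtain ⟨t, ht⟩ := h2
          have hd : temporalDist (profLab s) q.1 q.2 = 1 :=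
            le_antisymm (temporalDist_le_one (profLab s) h1 ((hmem _ _ t).mp ht))
              (one_le_temporalDist (profLab s) h1)
          rw [hd]
          simp [hfdef, h1, Finset.nonempty_of_ne_empty, show (labelFinset s q.1 q.2).Nonempty from ⟨t, ht⟩]
        · have hd : temporalDist (profLab s) q.1 q.2 = 2 :=
            le_antisymm (hdist2 _ _ h1)
              (two_le_temporalDist (profLab s) h1 (hnoedge _ _ h2))
          rw [hd]
          simp [hfdef, h1, h2]
    have hsum2 : ∑ u : Fin n, ∑ v : Fin n, (temporalDist (profLab s) u v : ℝ≥0∞)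
        = ((2 * D.card - P.card : ℕ) : ℝ≥0∞) := by
      rw [← Finset.sum_product', Finset.univ_product_univ]
      calc ∑ q : Fin n × Fin n, (temporalDist (profLab s) q.1 q.2 : ℝ≥0∞)
          = ∑ q : Fin n × Fin n, (f q : ℝ≥0∞) := Finset.sum_congr rfl fun q _ => hdpt q
        _ = ((∑ q : Fin n × Fin n, f q : ℕ) : ℝ≥0∞) := by push_cast; rfl
        _ = _ := by rw [hfsum]
    show ENNReal.ofReal α * (numLabels s : ℝ≥0∞) + _ = _
    rw [hLE, hsum2, htarget]
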